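/- Let F be a field of characteristic 5. In the algebra Q₂(1/3) over F, the element n := s₁ + s₂ + d₁ + d₂ annihilates the algebra: n·v = 0 for every v ∈ Q₂(1/3). In particular the line F·n is a nonzero proper ideal of Q₂(1/3), so Q₂(1/3) is not simple in characteristic 5. -/

import Mathlib

/-- The multiplication of the algebra `Q₂(1/3)` in the basis
`s₁ = e 0`, `s₂ = e 1`, `d₁ = e 2`, `d₂ = e 3`. -/
def mulQ2 {F : Type*} [Field F] (u v : Fin 4 → F) : Fin 4 → F :=
  ![u 0 * v 0 + (1/3) * (u 0*v 2 + u 2*v 0) + (1/3) * (u 0*v 3 + u 3*v 0)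
      - (1/3) * (u 2*v 3 + u 3*v 2),
    u 1 * v 1 + (1/3) * (u 1*v 2 + u 2*v 1) + (1/3) * (u 1*v 3 + u 3*v 1)
      - (1/3) * (u 2*v 3 + u 3*v 2),
    u 2 * v 2 + (1/6) * (u 0*v 2 + u 2*v 0) - (1/6) * (u 0*v 3 + u 3*v 0)
      + (1/6) * (u 1*v 2 + u 2*v 1) - (1/6) * (u 1*v 3 + u 3*v 1) + (1/3) * (u 2*v 3 + u 3*v 2),
    u 3 * v 3 - (1/6) * (u 0*v 2 + u 2*v 0) + (1/6) * (u 0*v 3 + u 3*v 0)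
      - (1/6) * (u 1*v 2 + u 2*v 1) + (1/6) * (u 1*v 3 + u 3*v 1) + (1/3) * (u 2*v 3 + u 3*v 2)]

set_option maxHeartbeats 1600000 in
/-- **`Q₂(1/3)` is not simple in characteristic 5.**
Let `F` be a field of characteristic 5.  In the algebra `Q₂(1/3)` over `F`, the element
`n := s₁ + s₂ + d₁ + d₂` annihilates the algebra: `n·v = 0` for every `v`.  In particular
the line `F·n` is a nonzero proper ideal of `Q₂(1/3)`, so `Q₂(1/3)` is not simple. -/
theorem Q2_char5_annihilator
    {F : Type*} [Field F]
    (h2 : (2 : F) ≠ 0) (h3 : (3 : F) ≠ 0) (h5 : (5 : F) = 0)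
    (s₁ s₂ d₁ d₂ n : Fin 4 → F)
    (hs₁ : s₁ = ![1, 0, 0, 0]) (hs₂ : s₂ = ![0, 1, 0, 0])
    (hd₁ : d₁ = ![0, 0, 1, 0]) (hd₂ : d₂ = ![0, 0, 0, 1])
    (hn : n = s₁ + s₂ + d₁ + d₂) :
    (∀ v : Fin 4 → F, mulQ2 n v = 0) ∧
    Submodule.span F {n} ≠ ⊥ ∧
    Submodule.span F {n} ≠ ⊤ ∧
    (∀ u ∈ Submodule.span F {n}, ∀ v : Fin 4 → F, mulQ2 v u ∈ Submodule.span F {n}) := by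
  subst hs₁ hs₂ hd₁ hd₂ hn
  have h6 : (6 : F) ≠ 0 := by
    have : (6 : F) = 2 * 3 := by norm_num
    rw [this]; exact mul_ne_zero h2 h3
  have h6i : (6 : F)⁻¹ * 6 = 1 := inv_mul_cancel₀ h6
  have hn0 : (![1,0,0,0] + ![0,1,0,0] + ![0,0,1,0] + ![0,0,0,1] : Fin 4 → F) = ![1,1,1,1] := by
    funext i; fin_cases i <;> simp
  rw [hn0]
  set m : Fin 4 → F := ![1,1,1,1] with hm
  have key : ∀ (c : F) (v : Fin 4 → F), mulQ2 v (c • m) = 0 := by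
    intro c v
    funext i
    fin_cases i
    · show _ = (0 : F)
      simp only [mulQ2, hm, Pi.smul_apply, smul_eq_mul, Matrix.cons_val_zero,
        Matrix.cons_val_one, Matrix.head_cons, Matrix.cons_val_two, Matrix.cons_val_three,
        Matrix.tail_cons, Fin.reduceFinMk, Fin.isValue]
      field_simp
      ring_nf
      linear_combination (c * v 0) * h5
    · show _ = (0 : F)
      simp only [mulQ2, hm, Pi.smul_apply, smul_eq_mul, Matrix.cons_val_zero,
        Matrix.cons_val_one, Matrix.head_cons, Matrix.cons_val_two, Matrix.cons_val_three,
        Matrix.tail_cons, Fin.reduceFinMk, Fin.isValue]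
      field_simp
      ring_nf
      linear_combination (c * v 1) * h5
    · show _ = (0 : F)
      simp only [mulQ2, hm, Pi.smul_apply, smul_eq_mul, Matrix.cons_val_zero,
        Matrix.cons_val_one, Matrix.head_cons, Matrix.cons_val_two, Matrix.cons_val_three,
        Matrix.tail_cons, Fin.reduceFinMk, Fin.isValue]
      field_simp
      ring_nf
      linear_combination (6 * c * v 2) * h5
    · show _ = (0 : F)
      simp only [mulQ2, hm, Pi.smul_apply, smul_eq_mul, Matrix.cons_val_zero,
        Matrix.cons_val_one, Matrix.head_cons, Matrix.cons_val_two, Matrix.cons_val_three,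
        Matrix.tail_cons, Fin.reduceFinMk, Fin.isValue]
      field_simp
      ring_nf
      linear_combination (6 * c * v 3) * h5
  have keycomm : ∀ v : Fin 4 → F, mulQ2 m v = 0 := by
    intro v
    funext i
    fin_cases i
    · show _ = (0 : F)
      simp only [mulQ2, hm, Matrix.cons_val_zero, Matrix.cons_val_one, Matrix.head_cons,
        Matrix.cons_val_two, Matrix.cons_val_three, Matrix.tail_cons, Fin.reduceFinMk, Fin.isValue]
      field_simp
      ring_nf
      linear_combination (v 0) * h5
    · show _ = (0 : F)
      simp only [mulQ2, hm, Matrix.cons_val_zero, Matrix.cons_val_one, Matrix.head_cons,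
        Matrix.cons_val_two, Matrix.cons_val_three, Matrix.tail_cons, Fin.reduceFinMk, Fin.isValue]
      field_simp
      ring_nf
      linear_combination (v 1) * h5
    · show _ = (0 : F)
      simp only [mulQ2, hm, Matrix.cons_val_zero, Matrix.cons_val_one, Matrix.head_cons,
        Matrix.cons_val_two, Matrix.cons_val_three, Matrix.tail_cons, Fin.reduceFinMk, Fin.isValue]
      field_simp
      ring_nf
      linear_combination (6 * v 2) * h5
    · show _ = (0 : F)
      simp only [mulQ2, hm, Matrix.cons_val_zero, Matrix.cons_val_one, Matrix.head_cons,
        Matrix.cons_val_two, Matrix.cons_val_three, Matrix.tail_cons, Fin.reduceFinMk, Fin.isValue]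
      field_simp
      ring_nf
      linear_combination (6 * v 3) * h5
  refine ⟨keycomm, ?_, ?_, ?_⟩
  · intro h
    have hmem : m ∈ Submodule.span F {m} := Submodule.mem_span_singleton_self m
    rw [h, Submodule.mem_bot] at hmem
    have := congrFun hmem 0
    simp [hm] at this
  · intro h
    have hmem : (![1,0,0,0] : Fin 4 → F) ∈ Submodule.span F {m} := h ▸ Submodule.mem_top
    rw [Submodule.mem_span_singleton] at hmem
    obtain ⟨c, hc⟩ := hmem
    have h0 := congrFun hc 0
    have h1 := congrFun hc 1
    simp [hm] at h0 h1
    rw [h1] at h0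
    exact one_ne_zero h0.symm
  · intro u hu v
    rw [Submodule.mem_span_singleton] at hu
    obtain ⟨c, hc⟩ := hu
    rw [← hc, key c v]
    exact Submodule.zero_mem _
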